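/- Let K be a number field and 𝔞 a nonzero fractional ideal of 𝒪_K. (Surjectivity) For every s = (s₁, …, sₙ) ∈ ℝⁿ there exist μ ∈ 𝔞 ∖ {0} and t ∈ ℝⁿ such that ((1/μ)𝔞, t) is an f-representation and log wᵢ(μ) + tᵢ = sᵢ for all 1 ≤ i ≤ n. (Injectivity) If μ, μ' ∈ K^* and t, t' ∈ ℝⁿ are such that ((1/μ)𝔞, t) and ((1/μ')𝔞, t') are f-representations, and there exists a unit ε ∈ 𝒪_K^* with log wᵢ(μ) + tᵢ = log wᵢ(μ') + t'ᵢ + log wᵢ(ε) for all 1 ≤ i ≤ n, then (1/μ)𝔞 ∼ (1/μ')𝔞 and t = t'. In other words, the map sending the class of an f-representation ((1/μ)𝔞, t) to (log w₁(μ) + t₁, …, log wₙ(μ) + tₙ) modulo the unit lattice Λ := {(log w₁(ε), …, log wₙ(ε)) : ε ∈ 𝒪_K^*} is a bijection onto ℝⁿ/Λ. -/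

import Mathlib

open NumberField
open scoped nonZeroDivisors

/-- Lexicographic comparison of real tuples: `a ≤ₗₑₓ b`. -/
def lexLe {m : ℕ} (a b : Fin m → ℝ) : Prop :=
  a = b ∨ ∃ i : Fin m, a i < b i ∧ ∀ j : Fin m, j < i → a j = b j

/-- The vector of absolute values of `h` at the infinite places, the distinguished place `w₀`
first. -/
def absVec {K : Type*} [Field K] [NumberField K] {n : ℕ}
    (w₀ : InfinitePlace K) (w : Fin n → InfinitePlace K) (h : K) : Fin (n + 1) → ℝ :=
  Fin.cons (w₀ h) (fun i => w i h)

/-- The total preorder `≼` on `K^*`: `h ≼ h'` iff the vector of absolute values of `h` is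
lexicographically at most that of `h'` (distinguished place first). -/
def preceq {K : Type*} [Field K] [NumberField K] {n : ℕ}
    (w₀ : InfinitePlace K) (w : Fin n → InfinitePlace K) (h h' : K) : Prop :=
  lexLe (absVec w₀ w h) (absVec w₀ w h')

/-- The box `B(𝔟, (t, ℓ)) = {h ∈ 𝔟 : w₀(h) ≤ exp ℓ and wᵢ(h) ≤ exp tᵢ for 1 ≤ i ≤ n}`. -/
def box {K : Type*} [Field K] [NumberField K] {n : ℕ}
    (w₀ : InfinitePlace K) (w : Fin n → InfinitePlace K)
    (𝔟 : FractionalIdeal (𝓞 K)⁰ K) (t : Fin n → ℝ) (ℓ : ℝ) : Set K :=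
  {h : K | h ∈ 𝔟 ∧ w₀ h ≤ Real.exp ℓ ∧ ∀ i : Fin n, w i h ≤ Real.exp (t i)}

/-- A pair `(𝔟, t)` is an *f-representation* if `1 ∈ B(𝔟, (t, 0))` and `1` is a smallest
element of `B(𝔟, (t, 0)) ∖ {0}` with respect to `≼`. -/
def IsFRep {K : Type*} [Field K] [NumberField K] {n : ℕ}
    (w₀ : InfinitePlace K) (w : Fin n → InfinitePlace K)
    (𝔟 : FractionalIdeal (𝓞 K)⁰ K) (t : Fin n → ℝ) : Prop :=
  (1 : K) ∈ box w₀ w 𝔟 t 0 ∧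
  ∀ h ∈ box w₀ w 𝔟 t 0, h ≠ 0 → preceq w₀ w 1 h

/-- Two nonzero fractional ideals are *equivalent* if they differ by a principal ideal whose
generator has absolute value `1` at every infinite place. -/
def EquivIdeal {K : Type*} [Field K] [NumberField K]
    (𝔟 𝔟' : FractionalIdeal (𝓞 K)⁰ K) : Prop :=
  ∃ h : K, h ≠ 0 ∧ 𝔟 = FractionalIdeal.spanSingleton (𝓞 K)⁰ h * 𝔟' ∧
    ∀ v : InfinitePlace K, v h = 1

lemma lexLe_total {m : ℕ} (a b : Fin m → ℝ) : lexLe a b ∨ lexLe b a := by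
  by_cases h : a = b
  · exact Or.inl (Or.inl h)
  · obtain ⟨i, hi⟩ := Function.ne_iff.mp h
    have hD : (Finset.univ.filter (fun i : Fin m => a i ≠ b i)).Nonempty :=
      ⟨i, Finset.mem_filter.mpr ⟨Finset.mem_univ i, hi⟩⟩
    set i₀ := (Finset.univ.filter (fun i : Fin m => a i ≠ b i)).min' hD with hi₀def
    have hi₀ : a i₀ ≠ b i₀ := (Finset.mem_filter.mp (Finset.min'_mem _ hD)).2
    have hbefore : ∀ j, j < i₀ → a j = b j := by
      intro j hj
      by_contra hne
      exact absurd (Finset.min'_le _ j (Finset.mem_filter.mpr ⟨Finset.mem_univ j, hne⟩))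
        (not_le.mpr hj)
    rcases lt_or_gt_of_ne hi₀ with hlt | hlt
    · exact Or.inl (Or.inr ⟨i₀, hlt, hbefore⟩)
    · exact Or.inr (Or.inr ⟨i₀, hlt, fun j hj => (hbefore j hj).symm⟩)

lemma lexLe_trans {m : ℕ} {a b c : Fin m → ℝ} (hab : lexLe a b) (hbc : lexLe b c) :
    lexLe a c := by
  rcases hab with rfl | ⟨i, hi, hj⟩
  · exact hbc
  rcases hbc with rfl | ⟨i', hi', hj'⟩
  · exact Or.inr ⟨i, hi, hj⟩
  rcases lt_trichotomy i i' with h | rfl | h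
  · exact Or.inr ⟨i, hi.trans_eq (hj' i h),
      fun j hjlt => (hj j hjlt).trans (hj' j (hjlt.trans h))⟩
  · exact Or.inr ⟨i, hi.trans hi', fun j hjlt => (hj j hjlt).trans (hj' j hjlt)⟩
  · exact Or.inr ⟨i', (hj i' h) ▸ hi', fun j hjlt => (hj j (hjlt.trans h)).trans (hj' j hjlt)⟩

lemma exists_min_lexLe {α : Type*} {m : ℕ} (F : α → Fin m → ℝ) (S : Set α)
    (hfin : S.Finite) : S.Nonempty → ∃ a ∈ S, ∀ b ∈ S, lexLe (F a) (F b) := by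
  refine Set.Finite.induction_on S hfin (fun hne => absurd hne (by simp)) @fun a s ha hs ih => ?_
  intro _
  rcases s.eq_empty_or_nonempty with rfl | hsne
  · refine ⟨a, Set.mem_insert _ _, fun x hx => ?_⟩
    rcases Set.mem_insert_iff.mp hx with rfl | hx
    · exact Or.inl rfl
    · simp at hx
  · obtain ⟨b, hbs, hbmin⟩ := ih hsne
    rcases lexLe_total (F a) (F b) with hab | hba
    · refine ⟨a, Set.mem_insert _ _, fun x hx => ?_⟩
      rcases Set.mem_insert_iff.mp hx with rfl | hx
      · exact Or.inl rfl
      · exact lexLe_trans hab (hbmin x hx)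
    · refine ⟨b, Set.mem_insert_of_mem _ hbs, fun x hx => ?_⟩
      rcases Set.mem_insert_iff.mp hx with rfl | hx
      · exact hba
      · exact hbmin x hx

lemma lexLe_of_mul {m : ℕ} {c a b : Fin m → ℝ} (hc : ∀ i, 0 < c i)
    (h : lexLe (fun i => c i * a i) (fun i => c i * b i)) : lexLe a b := by
  rcases h with h | ⟨i, hi, hj⟩
  · exact Or.inl (funext fun i => mul_left_cancel₀ (hc i).ne' (congrFun h i))
  · exact Or.inr ⟨i, (mul_lt_mul_iff_right₀ (hc i)).mp hi,
      fun j hji => mul_left_cancel₀ (hc j).ne' (hj j hji)⟩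

lemma all_one {m : ℕ} {a : Fin (m + 1) → ℝ}
    (h1 : a 0 ≤ 1 → lexLe (fun _ => 1) a)
    (h2 : (a 0)⁻¹ ≤ 1 → lexLe (fun _ => 1) (fun j => (a j)⁻¹)) :
    ∀ j, a j = 1 := by
  have ha0 : a 0 = 1 := by
    rcases lt_trichotomy (a 0) 1 with h | h | h
    · rcases h1 h.le with heq | ⟨i, hi, hj⟩
      · exact (congrFun heq 0).symm
      · rcases eq_or_ne i 0 with rfl | hne
        · exact absurd (hi.trans h) (lt_irrefl _)
        · exact absurd (hj 0 (Fin.pos_of_ne_zero hne)).symm h.ne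
    · exact h
    · have h' : (a 0)⁻¹ < 1 := inv_lt_one_of_one_lt₀ h
      rcases h2 h'.le with heq | ⟨i, hi, hj⟩
      · have := (congrFun heq 0).symm
        exact absurd (inv_eq_one.mp this) h.ne'
      · rcases eq_or_ne i 0 with rfl | hne
        · exact absurd (hi.trans h') (lt_irrefl _)
        · have := (hj 0 (Fin.pos_of_ne_zero hne)).symm
          exact absurd (inv_eq_one.mp this) h.ne'
  rcases h1 ha0.le with heq | ⟨i, hi, hj⟩
  · exact fun j => (congrFun heq j).symm
  · rcases h2 (by rw [ha0]; norm_num) with heq | ⟨i', hi', hj'⟩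
    · exact fun j => inv_eq_one.mp (congrFun heq j).symm
    · exfalso
      have hai' : a i' < 1 := ((one_lt_inv_iff₀).mp hi').2
      rcases lt_trichotomy i i' with hlt | rfl | hlt
      · exact hi.ne' (inv_eq_one.mp (hj' i hlt).symm)
      · exact absurd (hi.trans hai') (lt_irrefl _)
      · exact hai'.ne (hj i' hlt).symm

section AbsVec
variable {K : Type*} [Field K] [NumberField K] {n : ℕ}
  (w₀ : InfinitePlace K) (w : Fin n → InfinitePlace K)

lemma absVec_one : absVec w₀ w (1 : K) = fun _ => 1 := by
  funext j
  induction j using Fin.cases <;> simp [absVec]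

lemma absVec_mul (x y : K) :
    absVec w₀ w (x * y) = fun j => absVec w₀ w x j * absVec w₀ w y j := by
  funext j
  induction j using Fin.cases <;> simp [absVec]

lemma absVec_inv (x : K) :
    absVec w₀ w x⁻¹ = fun j => (absVec w₀ w x j)⁻¹ := by
  funext j
  induction j using Fin.cases <;> simp [absVec, map_inv₀]

lemma absVec_pos {x : K} (hx : x ≠ 0) : ∀ j, 0 < absVec w₀ w x j := by
  intro j
  induction j using Fin.cases <;>
    simp [absVec, NumberField.InfinitePlace.pos_iff, hx]

lemma finite_box_abs (𝔞 : FractionalIdeal (𝓞 K)⁰ K) (B : ℝ) :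
    {h : K | h ∈ 𝔞 ∧ ∀ v : InfinitePlace K, v h ≤ B}.Finite := by
  obtain ⟨d, hd, hint⟩ := 𝔞.isFractional
  have hd0 : algebraMap (𝓞 K) K d ≠ 0 :=
    NumberField.RingOfIntegers.coe_ne_zero_iff.mpr (nonZeroDivisors.ne_zero hd)
  set dK : K := algebraMap (𝓞 K) K d with hdK
  set Bd : NNReal := Finset.univ.sup (fun φ : K →+* ℂ => ‖φ dK‖₊) with hBd
  have hfin := NumberField.Embeddings.finite_of_norm_le K ℂ ((Bd : ℝ) * max B 0)
  refine (hfin.preimage (f := fun h : K => dK * h) ?_).subset ?_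
  · intro x _ y _ hxy
    exact mul_left_cancel₀ hd0 hxy
  · rintro h ⟨hmem, hb⟩
    obtain ⟨r, hr⟩ := hint h hmem
    have hdh : dK * h = algebraMap (𝓞 K) K r := by
      rw [hr, Algebra.smul_def]
    refine ⟨?_, fun φ => ?_⟩
    · show IsIntegral ℤ (dK * h)
      rw [hdh]
      exact NumberField.RingOfIntegers.isIntegral_coe r
    show ‖φ (dK * h)‖ ≤ _
    rw [map_mul, norm_mul]
    have h1 : ‖φ dK‖ ≤ (Bd : ℝ) := by
      exact_mod_cast Finset.le_sup (f := fun φ : K →+* ℂ => ‖φ dK‖₊) (Finset.mem_univ φ)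
    have h2 : ‖φ h‖ ≤ max B 0 := by
      have := hb (NumberField.InfinitePlace.mk φ)
      rw [NumberField.InfinitePlace.apply] at this
      exact this.trans (le_max_left _ _)
    exact mul_le_mul h1 h2 (norm_nonneg _) Bd.coe_nonneg

end AbsVec

theorem stmt14 {K : Type*} [Field K] [NumberField K] {n : ℕ}
    (w₀ : InfinitePlace K) (w : Fin n → InfinitePlace K)
    (hw : Function.Bijective (Fin.cons w₀ w : Fin (n + 1) → InfinitePlace K))
    (𝔞 : FractionalIdeal (𝓞 K)⁰ K) (h𝔞 : 𝔞 ≠ 0) :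
    (∀ s : Fin n → ℝ, ∃ (μ : K) (t : Fin n → ℝ), μ ∈ 𝔞 ∧ μ ≠ 0 ∧
      IsFRep w₀ w (FractionalIdeal.spanSingleton (𝓞 K)⁰ μ⁻¹ * 𝔞) t ∧
      ∀ i : Fin n, Real.log (w i μ) + t i = s i) ∧
    (∀ (μ μ' : K) (t t' : Fin n → ℝ), μ ≠ 0 → μ' ≠ 0 →
      IsFRep w₀ w (FractionalIdeal.spanSingleton (𝓞 K)⁰ μ⁻¹ * 𝔞) t →
      IsFRep w₀ w (FractionalIdeal.spanSingleton (𝓞 K)⁰ μ'⁻¹ * 𝔞) t' →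
      (∃ ε : (𝓞 K)ˣ, ∀ i : Fin n,
        Real.log (w i μ) + t i =
          Real.log (w i μ') + t' i + Real.log (w i (algebraMap (𝓞 K) K ε))) →
      EquivIdeal (FractionalIdeal.spanSingleton (𝓞 K)⁰ μ⁻¹ * 𝔞)
        (FractionalIdeal.spanSingleton (𝓞 K)⁰ μ'⁻¹ * 𝔞) ∧ t = t') := by
  constructor
  · -- Surjectivity
    intro s
    classical
    set e : Fin (n + 1) ≃ InfinitePlace K := Equiv.ofBijective _ hw with he
    have he0 : e 0 = w₀ := by simp [he]
    have hesucc : ∀ i : Fin n, e i.succ = w i := fun i => by simp [he]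
    set g : Fin n → NNReal := fun i => (Real.exp (s i)).toNNReal with hg
    have hgpos : ∀ i, 0 < g i := fun i => Real.toNNReal_pos.mpr (Real.exp_pos _)
    set I : (FractionalIdeal (𝓞 K)⁰ K)ˣ := Units.mk0 𝔞 h𝔞 with hI
    set Q₀ : NNReal := NumberField.mixedEmbedding.convexBodyLTFactor K *
      ∏ i, g i ^ NumberField.InfinitePlace.mult (w i) with hQ₀def
    have hQ₀ : 0 < Q₀ := by
      apply mul_pos
      · exact pos_iff_ne_zero.mpr (NumberField.mixedEmbedding.convexBodyLTFactor_ne_zero K)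
      · exact Finset.prod_pos fun i _ => pow_pos (hgpos i) _
    set B : NNReal := (NumberField.mixedEmbedding.minkowskiBound K I).toNNReal with hB
    set c : NNReal := max 1 (B / Q₀ + 1) with hc
    have hc1 : (1 : NNReal) ≤ c := le_max_left _ _
    have hBlt : B < c ^ NumberField.InfinitePlace.mult w₀ * Q₀ := by
      have h1 : B < (B / Q₀ + 1) * Q₀ := by
        rw [add_mul, div_mul_cancel₀ _ hQ₀.ne', one_mul]
        exact lt_add_of_pos_right _ hQ₀
      refine h1.trans_le ?_
      have h2 : B / Q₀ + 1 ≤ c := le_max_right _ _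
      have h3 : c ≤ c ^ NumberField.InfinitePlace.mult w₀ :=
        le_self_pow₀ hc1 NumberField.InfinitePlace.mult_ne_zero
      exact mul_le_mul (h2.trans h3) le_rfl zero_le zero_le
    set f : InfinitePlace K → NNReal := fun v => (Fin.cons c g : Fin (n + 1) → NNReal) (e.symm v) with hf
    have hfe : ∀ j, f (e j) = (Fin.cons c g : Fin (n + 1) → NNReal) j := fun j => by
      rw [hf]; simp
    have hfw₀ : f w₀ = c := by
      rw [← he0, hfe]; simp
    have hfwi : ∀ i, f (w i) = g i := fun i => by
      rw [← hesucc i, hfe]; simp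
    have hprodeq : (∏ v : InfinitePlace K, f v ^ NumberField.InfinitePlace.mult v)
        = c ^ NumberField.InfinitePlace.mult w₀ *
            ∏ i, g i ^ NumberField.InfinitePlace.mult (w i) := by
      rw [← Equiv.prod_comp e (fun v => f v ^ NumberField.InfinitePlace.mult v),
        Fin.prod_univ_succ]
      congr 1
      · rw [he0, hfw₀]
      · exact Finset.prod_congr rfl fun i _ => by rw [hesucc i, hfwi i]
    have hvol : NumberField.mixedEmbedding.minkowskiBound K I <
        MeasureTheory.volume (NumberField.mixedEmbedding.convexBodyLT K f) := by
      rw [NumberField.mixedEmbedding.convexBodyLT_volume,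
        ← ENNReal.coe_toNNReal (NumberField.mixedEmbedding.minkowskiBound_lt_top K I).ne,
        ← ENNReal.coe_mul, ENNReal.coe_lt_coe, ← hB, hprodeq]
      calc B < c ^ NumberField.InfinitePlace.mult w₀ * Q₀ := hBlt
      _ = _ := by rw [hQ₀def]; ring
    obtain ⟨μ, hμmem, hμ0, hμlt⟩ :=
      NumberField.mixedEmbedding.exists_ne_zero_mem_ideal_lt K I hvol
    have hμ𝔞 : μ ∈ 𝔞 := by rwa [hI, Units.val_mk0] at hμmem
    have hμs : ∀ i, w i μ ≤ Real.exp (s i) := fun i => by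
      have h1 := (hμlt (w i)).le
      rw [hfwi i] at h1
      rwa [hg, Real.coe_toNNReal _ (Real.exp_pos _).le] at h1
    have hμc : w₀ μ ≤ (c : ℝ) := by
      have h1 := (hμlt w₀).le; rwa [hfw₀] at h1
    set S : Set K :=
      {x : K | x ∈ 𝔞 ∧ x ≠ 0 ∧ w₀ x ≤ (c : ℝ) ∧ ∀ i, w i x ≤ Real.exp (s i)} with hS
    have hSfin : S.Finite := by
      refine (finite_box_abs 𝔞 ((c : ℝ) + ∑ i, Real.exp (s i))).subset ?_
      rintro x ⟨h1, _, h3, h4⟩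
      refine ⟨h1, fun v => ?_⟩
      obtain ⟨j, rfl⟩ := hw.2 v
      have hsum : (0 : ℝ) ≤ ∑ i, Real.exp (s i) :=
        Finset.sum_nonneg fun i _ => (Real.exp_pos _).le
      induction j using Fin.cases with
      | zero =>
          simp only [Fin.cons_zero]
          exact le_add_of_le_of_nonneg h3 hsum
      | succ i =>
          simp only [Fin.cons_succ]
          have hle : w i x ≤ ∑ i, Real.exp (s i) :=
            (h4 i).trans
              (Finset.single_le_sum (fun i _ => (Real.exp_pos (s i)).le) (Finset.mem_univ i))
          exact le_add_of_nonneg_of_le c.coe_nonneg hle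
    have hSne : S.Nonempty := ⟨μ, hμ𝔞, hμ0, hμc, hμs⟩
    obtain ⟨ν, hνS, hνmin⟩ := exists_min_lexLe (fun x => absVec w₀ w x) S hSfin hSne
    obtain ⟨hν𝔞, hν0, hνc, hνs⟩ := hνS
    have hνpos : ∀ v : InfinitePlace K, 0 < v ν := fun v =>
      NumberField.InfinitePlace.pos_iff.mpr hν0
    refine ⟨ν, fun i => s i - Real.log (w i ν), hν𝔞, hν0, ⟨?_, ?_⟩, fun i => by ring⟩
    · refine ⟨?_, ?_, ?_⟩
      · exact FractionalIdeal.mem_singleton_mul.mpr ⟨ν, hν𝔞, (inv_mul_cancel₀ hν0).symm⟩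
      · simp
      · intro i
        rw [map_one]
        refine Real.one_le_exp ?_
        show (0 : ℝ) ≤ s i - Real.log (w i ν)
        have := (Real.log_le_iff_le_exp (hνpos (w i))).mpr (hνs i)
        linarith
    · intro x hx hx0
      obtain ⟨hxmem, hx₀, hxi⟩ := hx
      obtain ⟨y, hy𝔞, hyeq⟩ := FractionalIdeal.mem_singleton_mul.mp hxmem
      have hyx : y = ν * x := by
        rw [hyeq, ← mul_assoc, mul_inv_cancel₀ hν0, one_mul]
      have hyS : y ∈ S := by
        refine ⟨hy𝔞, by rw [hyx]; exact mul_ne_zero hν0 hx0, ?_, ?_⟩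
        · rw [hyx, map_mul]
          have hx1 : w₀ x ≤ 1 := by rwa [Real.exp_zero] at hx₀
          calc w₀ ν * w₀ x ≤ w₀ ν * 1 :=
                mul_le_mul_of_nonneg_left hx1 (hνpos w₀).le
          _ = w₀ ν := mul_one _
          _ ≤ c := hνc
        · intro i
          rw [hyx, map_mul]
          calc w i ν * w i x ≤ w i ν * Real.exp (s i - Real.log (w i ν)) :=
                mul_le_mul_of_nonneg_left (hxi i) (hνpos (w i)).le
          _ = Real.exp (s i) := by
                rw [Real.exp_sub, Real.exp_log (hνpos (w i)), ← mul_div_assoc]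
                rw [mul_comm]
                exact mul_div_cancel_right₀ _ (hνpos (w i)).ne'
      have hlex : lexLe (absVec w₀ w ν) (absVec w₀ w y) := hνmin y hyS
      rw [hyx, absVec_mul] at hlex
      have hlex' : lexLe (fun j => absVec w₀ w ν j * 1)
          (fun j => absVec w₀ w ν j * absVec w₀ w x j) := by
        simpa using hlex
      have := lexLe_of_mul (absVec_pos w₀ w hν0) hlex'
      unfold preceq
      rw [absVec_one]
      exact this
  · -- Injectivity
    rintro μ μ' t t' hμ0 hμ'0 hF hF' ⟨ε, hε⟩
    classical
    set εK : K := algebraMap (𝓞 K) K (ε : 𝓞 K) with hεKdef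
    have hεK0 : εK ≠ 0 := NumberField.RingOfIntegers.coe_ne_zero_iff.mpr ε.ne_zero
    have hεKinv : εK⁻¹ = algebraMap (𝓞 K) K ((ε⁻¹ : (𝓞 K)ˣ) : 𝓞 K) := by
      refine inv_eq_of_mul_eq_one_right ?_
      rw [hεKdef, ← map_mul]
      norm_cast
      simp
    have hμ𝔞 : μ ∈ 𝔞 := by
      obtain ⟨y, hy, h1⟩ := FractionalIdeal.mem_singleton_mul.mp hF.1.1
      have h2 : y = μ := by
        have h3 := congrArg (fun z => μ * z) h1
        simpa [← mul_assoc, mul_inv_cancel₀ hμ0] using h3.symm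
      exact h2 ▸ hy
    have hμ'𝔞 : μ' ∈ 𝔞 := by
      obtain ⟨y, hy, h1⟩ := FractionalIdeal.mem_singleton_mul.mp hF'.1.1
      have h2 : y = μ' := by
        have h3 := congrArg (fun z => μ' * z) h1
        simpa [← mul_assoc, mul_inv_cancel₀ hμ'0] using h3.symm
      exact h2 ▸ hy
    set h : K := μ' * εK * μ⁻¹ with hhdef
    have hh0 : h ≠ 0 := mul_ne_zero (mul_ne_zero hμ'0 hεK0) (inv_ne_zero hμ0)
    have hμ'ε𝔞 : μ' * εK ∈ 𝔞 := by
      have h1 := Submodule.smul_mem (𝔞 : Submodule (𝓞 K) K) (ε : 𝓞 K)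
        (FractionalIdeal.mem_coe.mpr hμ'𝔞)
      rw [Algebra.smul_def] at h1
      have h2 := FractionalIdeal.mem_coe.mp h1
      rwa [mul_comm] at h2
    have hμεinv𝔞 : μ * εK⁻¹ ∈ 𝔞 := by
      have h1 := Submodule.smul_mem (𝔞 : Submodule (𝓞 K) K) ((ε⁻¹ : (𝓞 K)ˣ) : 𝓞 K)
        (FractionalIdeal.mem_coe.mpr hμ𝔞)
      rw [Algebra.smul_def, ← hεKinv] at h1
      have h2 := FractionalIdeal.mem_coe.mp h1
      rwa [mul_comm] at h2
    have hhmem : h ∈ FractionalIdeal.spanSingleton (𝓞 K)⁰ μ⁻¹ * 𝔞 :=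
      FractionalIdeal.mem_singleton_mul.mpr ⟨μ' * εK, hμ'ε𝔞, by rw [hhdef]; ring⟩
    have hhinv : h⁻¹ = μ * εK⁻¹ * μ'⁻¹ := by
      rw [hhdef]
      rw [mul_inv, mul_inv, inv_inv]
      ring
    have hhinvmem : h⁻¹ ∈ FractionalIdeal.spanSingleton (𝓞 K)⁰ μ'⁻¹ * 𝔞 := by
      rw [hhinv]
      exact FractionalIdeal.mem_singleton_mul.mpr ⟨μ * εK⁻¹, hμεinv𝔞, by ring⟩
    have hpos : ∀ (v : InfinitePlace K) (x : K), x ≠ 0 → 0 < v x := fun v x hx =>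
      NumberField.InfinitePlace.pos_iff.mpr hx
    have ht0 : ∀ i, 0 ≤ t i := fun i => by
      have h1 := hF.1.2.2 i
      rw [map_one] at h1
      exact Real.one_le_exp_iff.mp h1
    have ht'0 : ∀ i, 0 ≤ t' i := fun i => by
      have h1 := hF'.1.2.2 i
      rw [map_one] at h1
      exact Real.one_le_exp_iff.mp h1
    have hwih : ∀ i, w i h = Real.exp (t i - t' i) := by
      intro i
      have h1 := hε i
      have h2 : w i h = w i μ' * w i εK * (w i μ)⁻¹ := by
        rw [hhdef, map_mul, map_mul, map_inv₀]
      rw [h2, show t i - t' i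
          = Real.log (w i μ') + Real.log (w i εK) - Real.log (w i μ) by
        rw [hεKdef] at h1 ⊢; linarith]
      rw [Real.exp_sub, Real.exp_add, Real.exp_log (hpos _ _ hμ'0),
        Real.exp_log (hpos _ _ hεK0), Real.exp_log (hpos _ _ hμ0), div_eq_mul_inv]
    have hwihinv : ∀ i, w i h⁻¹ = Real.exp (t' i - t i) := fun i => by
      rw [map_inv₀, hwih i, ← Real.exp_neg, neg_sub]
    have hboxh : w₀ h ≤ 1 →
        h ∈ box w₀ w (FractionalIdeal.spanSingleton (𝓞 K)⁰ μ⁻¹ * 𝔞) t 0 := fun hle =>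
      ⟨hhmem, by rwa [Real.exp_zero], fun i => by
        rw [hwih i]; exact Real.exp_le_exp.mpr (by linarith [ht'0 i])⟩
    have hboxhinv : w₀ h⁻¹ ≤ 1 →
        h⁻¹ ∈ box w₀ w (FractionalIdeal.spanSingleton (𝓞 K)⁰ μ'⁻¹ * 𝔞) t' 0 := fun hle =>
      ⟨hhinvmem, by rwa [Real.exp_zero], fun i => by
        rw [hwihinv i]; exact Real.exp_le_exp.mpr (by linarith [ht0 i])⟩
    have hall : ∀ j, absVec w₀ w h j = 1 := by
      refine all_one ?_ ?_
      · intro h0le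
        have h0le' : w₀ h ≤ 1 := by simpa [absVec] using h0le
        have hb := hF.2 h (hboxh h0le') hh0
        unfold preceq at hb
        rwa [absVec_one] at hb
      · intro h0le
        have h0le' : w₀ h⁻¹ ≤ 1 := by
          rw [map_inv₀]; simpa [absVec] using h0le
        have hb := hF'.2 h⁻¹ (hboxhinv h0le') (inv_ne_zero hh0)
        unfold preceq at hb
        rw [absVec_one, absVec_inv] at hb
        exact hb
    have htt' : t = t' := by
      funext i
      have h1 := hwih i
      have h2 : w i h = 1 := by simpa [absVec] using hall i.succ
      rw [h2] at h1
      have h3 := congrArg Real.log h1.symm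
      rw [Real.log_exp, Real.log_one] at h3
      linarith
    have hεspan : FractionalIdeal.spanSingleton (𝓞 K)⁰ εK = 1 := by
      rw [hεKdef, ← FractionalIdeal.coeIdeal_span_singleton,
        Ideal.span_singleton_eq_top.mpr ε.isUnit, FractionalIdeal.coeIdeal_top]
    refine ⟨⟨h, hh0, ?_, ?_⟩, htt'⟩
    · have hspan : FractionalIdeal.spanSingleton (𝓞 K)⁰ h *
          FractionalIdeal.spanSingleton (𝓞 K)⁰ μ'⁻¹
          = FractionalIdeal.spanSingleton (𝓞 K)⁰ μ⁻¹ := by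
        rw [FractionalIdeal.spanSingleton_mul_spanSingleton]
        have hcalc : h * μ'⁻¹ = εK * μ⁻¹ := by
          rw [hhdef]
          field_simp
        rw [hcalc, ← FractionalIdeal.spanSingleton_mul_spanSingleton, hεspan, one_mul]
      rw [← mul_assoc, hspan]
    · intro v
      obtain ⟨j, rfl⟩ := hw.2 v
      induction j using Fin.cases with
      | zero => simpa [absVec] using hall 0
      | succ i => simpa [absVec] using hall i.succ
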